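/- If Ranked Pairs rejects an edge (τ, τ') of weight α, then the final accepted edge set H contains a directed path from τ' to τ in which every edge has weight at least α. -/

import Mathlib

/-- A set `H` of directed edges has a directed cycle. -/
def hasCycle {V : Type*} (H : Set (V × V)) : Prop :=
  ∃ v : V, Relation.TransGen (fun a b : V => (a, b) ∈ H) v v

/-- The greedy (Ranked Pairs) edge-selection process: iterate over the list of
edges, adding each edge to the accumulated set `H` unless doing so would create a
directed cycle in `H`. -/
noncomputable def greedy {V : Type*} : List (V × V) → Set (V × V) → Set (V × V)
  | [], H => H
  | e :: rest, H =>
      greedy rest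
        (@ite _ (hasCycle (insert e H)) (Classical.propDecidable _) H (insert e H))

lemma subset_greedy {V : Type*} : ∀ (L : List (V × V)) (H : Set (V × V)), H ⊆ greedy L H
  | [], _ => subset_rfl
  | e :: rest, H => by
    simp only [greedy]
    split
    · exact subset_greedy rest H
    · exact (Set.subset_insert e H).trans (subset_greedy rest _)

lemma path_of_cycle_insert {V : Type*} {H : Set (V × V)} {a b : V}
    (hnc : ¬ hasCycle H) (hc : hasCycle (insert (a, b) H)) :
    Relation.ReflTransGen (fun p q : V => (p, q) ∈ H) b a := by
  obtain ⟨v, hv⟩ := hc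
  have key : ∀ x y : V, Relation.TransGen (fun p q : V => (p, q) ∈ insert (a, b) H) x y →
      Relation.TransGen (fun p q : V => (p, q) ∈ H) x y ∨
      (Relation.ReflTransGen (fun p q : V => (p, q) ∈ H) x a ∧
       Relation.ReflTransGen (fun p q : V => (p, q) ∈ H) b y) := by
    intro x y h
    induction h with
    | single h =>
      rcases Set.mem_insert_iff.mp h with h | h
      · have hx : x = a := congrArg Prod.fst h
        have hy : _ = b := congrArg Prod.snd h
        right
        exact ⟨hx ▸ Relation.ReflTransGen.refl, hy ▸ Relation.ReflTransGen.refl⟩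
      · exact Or.inl (Relation.TransGen.single h)
    | tail _ hstep ih =>
      rename_i c d _
      rcases Set.mem_insert_iff.mp hstep with h | h
      · have hc' : c = a := congrArg Prod.fst h
        have hd : d = b := congrArg Prod.snd h
        right
        refine ⟨?_, hd ▸ Relation.ReflTransGen.refl⟩
        rcases ih with ih | ih
        · exact hc' ▸ ih.to_reflTransGen
        · exact hc' ▸ ih.1
      · rcases ih with ih | ih
        · exact Or.inl (ih.tail h)
        · exact Or.inr ⟨ih.1, ih.2.tail h⟩
  rcases key v v hv with h | h
  · exact absurd ⟨v, h⟩ hnc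
  · exact h.2.trans h.1

lemma greedy_rejected {V : Type*} (w : V × V → ℚ) (τ τ' : V) (hne : τ ≠ τ') :
    ∀ (L : List (V × V)) (H : Set (V × V)),
      L.Pairwise (fun e f => w f ≤ w e) →
      (τ, τ') ∈ L →
      ¬ hasCycle H →
      (τ, τ') ∉ H →
      (∀ e ∈ H, w (τ, τ') ≤ w e) →
      (τ, τ') ∉ greedy L H →
      Relation.TransGen (fun a b : V => (a, b) ∈ greedy L H ∧ w (τ, τ') ≤ w (a, b)) τ' τ := by
  intro L
  induction L with
  | nil => intro H _ hmem; exact absurd hmem List.not_mem_nil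
  | cons e rest ih =>
    intro H hsort hmem hnc hnotH hwH hrej
    simp only [greedy] at hrej ⊢
    obtain ⟨hhead, hsort'⟩ := List.pairwise_cons.mp hsort
    by_cases hcyc : hasCycle (insert e H)
    · rw [if_pos hcyc] at hrej ⊢
      by_cases he : e = (τ, τ')
      · -- rejected here: path from τ' to τ in H
        subst he
        have hpath := path_of_cycle_insert hnc hcyc
        have htg : Relation.TransGen (fun p q : V => (p, q) ∈ H) τ' τ := by
          rcases (Relation.reflTransGen_iff_eq_or_transGen.mp hpath) with h | h
          · exact absurd h hne
          · exact h
        refine Relation.TransGen.mono ?_ _ _ htg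
        intro p q hpq
        exact ⟨subset_greedy rest H hpq, hwH _ hpq⟩
      · have hmem' : (τ, τ') ∈ rest := by
          rcases List.mem_cons.mp hmem with h | h
          · exact absurd h.symm he
          · exact h
        exact ih H hsort' hmem' hnc hnotH hwH hrej
    · rw [if_neg hcyc] at hrej ⊢
      by_cases he : e = (τ, τ')
      · exact absurd (subset_greedy rest _ (he ▸ Set.mem_insert e H)) hrej
      · have hmem' : (τ, τ') ∈ rest := by
          rcases List.mem_cons.mp hmem with h | h
          · exact absurd h.symm he
          · exact h
        refine ih (insert e H) hsort' hmem' hcyc ?_ ?_ hrej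
        · intro h
          rcases Set.mem_insert_iff.mp h with h | h
          · exact he h.symm
          · exact hnotH h
        · intro f hf
          rcases Set.mem_insert_iff.mp hf with h | h
          · exact h ▸ hhead _ hmem'
          · exact hwH _ h

/-- If Ranked Pairs rejects an edge `(τ, τ')` of weight `α`, then the final accepted
edge set contains a directed path from `τ'` to `τ` in which every edge has weight at
least `α`. -/
theorem rejected_edge_reverse_path {V : Type*} [Fintype V]
    (w : V × V → ℚ) (hw01 : ∀ e : V × V, 0 ≤ w e ∧ w e ≤ 1)
    (hcompl : ∀ a b : V, a ≠ b → w (a, b) + w (b, a) = 1)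
    (L : List (V × V))
    (hmemL : ∀ a b : V, a ≠ b → (a, b) ∈ L)
    (hnd : L.Nodup)
    (hirr : ∀ e ∈ L, e.1 ≠ e.2)
    (hsort : L.Pairwise (fun e f => w f ≤ w e))
    (τ τ' : V) (hne : τ ≠ τ')
    (hrej : (τ, τ') ∉ greedy L ∅) :
    Relation.TransGen
      (fun a b : V => (a, b) ∈ greedy L ∅ ∧ w (τ, τ') ≤ w (a, b)) τ' τ := by
  have hnc : ¬ hasCycle (∅ : Set (V × V)) := by
    rintro ⟨v, hv⟩
    cases hv with
    | single h => exact h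
    | tail _ h => exact h
  exact greedy_rejected w τ τ' hne L ∅ hsort (hmemL τ τ' hne) hnc
    (Set.notMem_empty _) (fun e he => absurd he (Set.notMem_empty _)) hrej
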